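/- Let S be a nonempty finite set, α ∈ (0,1], E ∈ ℰ with common row e, M ∈ 𝒫, and p = α·E + (1−α)·M a stochastic matrix that is irreducible and aperiodic. Then the matrix I − (1−α)·M is invertible, the row vector π = α·e·(I − (1−α)·M)^{−1} is the unique stationary distribution of p (that is, π is a probability distribution on S with π·p = π), and for every probability distribution μ on S and every n ≥ 1, the total variation distance satisfies (1/2)·Σ_{s∈S} |(μ·p^n)(s) − π(s)| ≤ 2·(1−α)^n. -/
import Mathlib


/-- A stochastic matrix on a finite set `S`: nonnegative entries, each row sums to 1. -/
def IsStochastic {S : Type*} [Fintype S] (p : Matrix S S ℝ) : Prop :=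
  (∀ i j, 0 ≤ p i j) ∧ ∀ i, ∑ j, p i j = 1

/-- Irreducibility: every state leads to every state in some positive number of steps. -/
def MatrixIrreducible {S : Type*} [Fintype S] [DecidableEq S] (p : Matrix S S ℝ) : Prop :=
  ∀ i j : S, ∃ n : ℕ, 1 ≤ n ∧ 0 < (p ^ n) i j

/-- Aperiodicity: for each state `i`, the gcd of the return times is 1, i.e. every common
divisor of `{n ≥ 1 : p^n(i,i) > 0}` equals 1. -/
def Aperiodic {S : Type*} [Fintype S] [DecidableEq S] (p : Matrix S S ℝ) : Prop :=
  ∀ i : S, ∀ d : ℕ, (∀ n : ℕ, 1 ≤ n → 0 < (p ^ n) i i → d ∣ n) → d = 1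

section Helpers

open Matrix Finset

variable {S : Type*} [Fintype S] [DecidableEq S]

lemma vecMul_matrix_smul (x : S → ℝ) (b : ℝ) (M : Matrix S S ℝ) :
    Matrix.vecMul x (b • M) = b • Matrix.vecMul x M := by
  ext j
  simp [Matrix.vecMul, dotProduct, Finset.mul_sum, mul_left_comm]

lemma sum_vecMul_rowsum_one (x : S → ℝ) (M : Matrix S S ℝ) (hM : ∀ i, ∑ j, M i j = 1) :
    ∑ j, Matrix.vecMul x M j = ∑ i, x i := by
  simp only [Matrix.vecMul, dotProduct]
  rw [Finset.sum_comm]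
  simp [← Finset.mul_sum, hM]

lemma sum_abs_vecMul_le (x : S → ℝ) (M : Matrix S S ℝ) (h0 : ∀ i j, 0 ≤ M i j)
    (hM : ∀ i, ∑ j, M i j = 1) :
    ∑ j, |Matrix.vecMul x M j| ≤ ∑ i, |x i| := by
  calc ∑ j, |Matrix.vecMul x M j| ≤ ∑ j, ∑ i, |x i| * M i j := by
        refine Finset.sum_le_sum fun j _ => ?_
        refine (Finset.abs_sum_le_sum_abs _ _).trans (Finset.sum_le_sum fun i _ => ?_)
        rw [abs_mul, abs_of_nonneg (h0 i j)]
    _ = ∑ i, |x i| := by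
        rw [Finset.sum_comm]
        simp [← Finset.mul_sum, hM]

lemma IsStochastic.pow {M : Matrix S S ℝ} (h : IsStochastic M) (n : ℕ) :
    IsStochastic (M ^ n) := by
  induction n with
  | zero =>
    refine ⟨fun i j => ?_, fun i => ?_⟩
    · simp only [pow_zero, Matrix.one_apply]
      split <;> norm_num
    · simp [pow_zero, Matrix.one_apply]
  | succ n ih =>
    rw [pow_succ]
    refine ⟨fun i j => ?_, fun i => ?_⟩
    · rw [Matrix.mul_apply]
      exact Finset.sum_nonneg fun k _ => mul_nonneg (ih.1 i k) (h.1 k j)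
    · simp only [Matrix.mul_apply]
      rw [Finset.sum_comm]
      simp [← Finset.mul_sum, h.2, ih.2 i]

end Helpers

open Matrix Finset in
theorem stationary_distribution_doeblin
    {S : Type*} [Fintype S] [Nonempty S] [DecidableEq S]
    (e : S → ℝ) (he0 : ∀ s, 0 ≤ e s) (he1 : ∑ s, e s = 1)
    (α : ℝ) (hα0 : 0 < α) (hα1 : α ≤ 1)
    (E M p : Matrix S S ℝ)
    (hE : IsStochastic E) (hEe : ∀ i j, E i j = e j)
    (hM : IsStochastic M)
    (hp : p = α • E + (1 - α) • M)
    (hps : IsStochastic p)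
    (hirr : MatrixIrreducible p) (haper : Aperiodic p) :
    IsUnit (1 - (1 - α) • M) ∧
    ∀ π : S → ℝ, π = α • Matrix.vecMul e (1 - (1 - α) • M)⁻¹ →
      (∀ s, 0 ≤ π s) ∧ (∑ s, π s = 1) ∧ Matrix.vecMul π p = π ∧
      (∀ ν : S → ℝ, (∀ s, 0 ≤ ν s) → (∑ s, ν s = 1) → Matrix.vecMul ν p = ν → ν = π) ∧
      ∀ (μ : S → ℝ), (∀ s, 0 ≤ μ s) → (∑ s, μ s = 1) →
        ∀ n : ℕ, 1 ≤ n →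
          (1 / 2 : ℝ) * ∑ s, |Matrix.vecMul μ (p ^ n) s - π s| ≤ 2 * (1 - α) ^ n := by
  set β : ℝ := 1 - α with hβ
  have hβ0 : 0 ≤ β := by simp [hβ]; linarith
  have hβ1 : β < 1 := by simp [hβ]; linarith
  set A : Matrix S S ℝ := 1 - β • M with hA
  -- vecMul against A
  have hvA : ∀ x : S → ℝ, Matrix.vecMul x A = x - β • Matrix.vecMul x M := by
    intro x
    rw [hA, Matrix.vecMul_sub, Matrix.vecMul_one, vecMul_matrix_smul]
  -- injectivity of vecMul · A
  have hzero : ∀ z : S → ℝ, Matrix.vecMul z A = 0 → z = 0 := by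
    intro z hz
    rw [hvA] at hz
    have hzeq : z = β • Matrix.vecMul z M := by
      have := sub_eq_zero.mp hz
      exact this
    have hsum : ∑ j, |z j| ≤ β * ∑ j, |z j| := by
      calc ∑ j, |z j| = ∑ j, |β • Matrix.vecMul z M j| := by
            refine Finset.sum_congr rfl fun j _ => ?_
            conv_lhs => rw [hzeq]
            rfl
        _ = β * ∑ j, |Matrix.vecMul z M j| := by
            simp only [smul_eq_mul, abs_mul, abs_of_nonneg hβ0, Finset.mul_sum]
        _ ≤ β * ∑ j, |z j| :=
            mul_le_mul_of_nonneg_left (sum_abs_vecMul_le z M hM.1 hM.2) hβ0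
    have hs0 : ∑ j, |z j| ≤ 0 := by nlinarith [Finset.sum_nonneg (fun j (_ : j ∈ Finset.univ) => abs_nonneg (z j))]
    have hs : ∑ j, |z j| = 0 :=
      le_antisymm hs0 (Finset.sum_nonneg fun j _ => abs_nonneg (z j))
    funext j
    have := (Finset.sum_eq_zero_iff_of_nonneg (fun j _ => abs_nonneg (z j))).mp hs j (Finset.mem_univ j)
    simpa using this
  have hinj : Function.Injective A.vecMul := by
    intro x y hxy
    have hxy' : Matrix.vecMul x A = Matrix.vecMul y A := hxy
    have : Matrix.vecMul (x - y) A = 0 := by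
      rw [Matrix.sub_vecMul, hxy', sub_self]
    have := hzero _ this
    exact sub_eq_zero.mp this
  have hAunit : IsUnit A := Matrix.vecMul_injective_iff_isUnit.mp hinj
  have hAdet : IsUnit A.det := (Matrix.isUnit_iff_isUnit_det A).mp hAunit
  have hinvA : A⁻¹ * A = 1 := Matrix.nonsing_inv_mul A hAdet
  refine ⟨hAunit, ?_⟩
  intro π hπ
  -- π satisfies π A = α e
  have hπA : Matrix.vecMul π A = α • e := by
    rw [hπ, Matrix.smul_vecMul, Matrix.vecMul_vecMul, hinvA, Matrix.vecMul_one]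
  have hπeq : π - β • Matrix.vecMul π M = α • e := by rw [← hvA, hπA]
  -- sum of π is 1
  have hπsum : ∑ s, π s = 1 := by
    have h1 : ∑ s, (π s - β * Matrix.vecMul π M s) = ∑ s, α * e s := by
      refine Finset.sum_congr rfl fun s _ => ?_
      have := congrFun hπeq s
      simpa using this
    rw [Finset.sum_sub_distrib, ← Finset.mul_sum, ← Finset.mul_sum,
      sum_vecMul_rowsum_one π M hM.2, he1] at h1
    have : (1 - β) * ∑ s, π s = α := by linarith
    have hα : (1 : ℝ) - β = α := by simp [hβ]
    rw [hα] at this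
    field_simp at this
    linarith [this]
  -- vecMul of a zero-sum or any vector against E
  have hvE : ∀ x : S → ℝ, Matrix.vecMul x E = (∑ i, x i) • e := by
    intro x
    funext j
    simp only [Matrix.vecMul, dotProduct, hEe, Pi.smul_apply, smul_eq_mul]
    rw [← Finset.sum_mul]
  -- stationarity
  have key : ∀ x : S → ℝ, Matrix.vecMul x p = ((∑ i, x i) * α) • e + β • Matrix.vecMul x M := by
    intro x
    rw [hp, Matrix.vecMul_add, vecMul_matrix_smul, vecMul_matrix_smul, hvE]
    rw [smul_smul, mul_comm α]
  have hπp : Matrix.vecMul π p = π := by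
    rw [key, hπsum, one_mul]
    have := hπeq
    rw [sub_eq_iff_eq_add] at this
    rw [← this]
  -- uniqueness
  have huniq : ∀ ν : S → ℝ, (∀ s, 0 ≤ ν s) → (∑ s, ν s = 1) → Matrix.vecMul ν p = ν → ν = π := by
    intro ν _ hνs hνp
    apply hinj
    show Matrix.vecMul ν A = Matrix.vecMul π A
    rw [hπA, hvA]
    rw [key, hνs, one_mul] at hνp
    rw [sub_eq_iff_eq_add]
    exact hνp.symm
  -- nonnegativity of π
  have hπ0 : ∀ s, 0 ≤ π s := by
    intro s
    -- geometric sum identity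
    set B : ℝ := ∑ j, ∑ t, |A⁻¹ j t| with hB
    have hgeom : ∀ n : ℕ, (∑ k ∈ Finset.range n, (β • M) ^ k) = A⁻¹ - (β • M) ^ n * A⁻¹ := by
      intro n
      have h1 : (∑ k ∈ Finset.range n, (β • M) ^ k) * (β • M - 1) = (β • M) ^ n - 1 :=
        geom_sum_mul _ n
      have h2 : (∑ k ∈ Finset.range n, (β • M) ^ k) * A = 1 - (β • M) ^ n := by
        have h3 : A = -(β • M - 1) := by rw [hA, neg_sub]
        rw [h3, mul_neg, h1, neg_sub]
      calc (∑ k ∈ Finset.range n, (β • M) ^ k)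
          = (∑ k ∈ Finset.range n, (β • M) ^ k) * (A * A⁻¹) := by
            rw [Matrix.mul_nonsing_inv A hAdet, mul_one]
        _ = ((∑ k ∈ Finset.range n, (β • M) ^ k) * A) * A⁻¹ := by rw [mul_assoc]
        _ = (1 - (β • M) ^ n) * A⁻¹ := by rw [h2]
        _ = A⁻¹ - (β • M) ^ n * A⁻¹ := by rw [sub_mul, one_mul]
    have hπdef : π = Matrix.vecMul (α • e) A⁻¹ := by
      rw [hπ, Matrix.smul_vecMul]
    have hkey : ∀ n : ℕ, π s = Matrix.vecMul (α • e) (∑ k ∈ Finset.range n, (β • M) ^ k) s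
        + β ^ n * Matrix.vecMul (α • e) (M ^ n * A⁻¹) s := by
      intro n
      have := congrArg (fun X => Matrix.vecMul (α • e) X s) (hgeom n)
      simp only [Matrix.vecMul_sub] at this
      have hpow : (β • M) ^ n = β ^ n • (M ^ n) := smul_pow β M n
      rw [hpow] at this
      have hsm : (β ^ n • (M ^ n)) * A⁻¹ = β ^ n • (M ^ n * A⁻¹) := smul_mul _ _ _
      rw [hsm, vecMul_matrix_smul] at this
      simp only [Pi.sub_apply, Pi.smul_apply, smul_eq_mul] at this
      rw [← hπdef] at this
      linarith [this]
    -- the geometric sum term is nonnegative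
    have hnn : ∀ n : ℕ, 0 ≤ Matrix.vecMul (α • e) (∑ k ∈ Finset.range n, (β • M) ^ k) s := by
      intro n
      have hent : ∀ i, 0 ≤ (∑ k ∈ Finset.range n, (β • M) ^ k) i s := by
        intro i
        have : (∑ k ∈ Finset.range n, (β • M) ^ k) i s
            = ∑ k ∈ Finset.range n, ((β • M) ^ k) i s := by
          simp [Matrix.sum_apply]
        rw [this]
        refine Finset.sum_nonneg fun k _ => ?_
        rw [smul_pow]
        have : (β ^ k • M ^ k) i s = β ^ k * (M ^ k) i s := rfl
        rw [this]
        exact mul_nonneg (pow_nonneg hβ0 k) ((hM.pow k).1 i s)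
      refine Finset.sum_nonneg fun i _ => ?_
      exact mul_nonneg (mul_nonneg hα0.le (he0 i)) (hent i)
    -- bound on the correction term
    have hbound : ∀ n : ℕ, |Matrix.vecMul (α • e) (M ^ n * A⁻¹) s| ≤ α * B := by
      intro n
      have hMn := hM.pow n
      calc |Matrix.vecMul (α • e) (M ^ n * A⁻¹) s|
          ≤ ∑ i, |α * e i * (M ^ n * A⁻¹) i s| := Finset.abs_sum_le_sum_abs _ _
        _ ≤ ∑ i, α * e i * B := by
            refine Finset.sum_le_sum fun i _ => ?_
            rw [abs_mul, abs_of_nonneg (mul_nonneg hα0.le (he0 i))]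
            refine mul_le_mul_of_nonneg_left ?_ (mul_nonneg hα0.le (he0 i))
            calc |(M ^ n * A⁻¹) i s| ≤ ∑ j, |(M ^ n) i j * A⁻¹ j s| := by
                  rw [Matrix.mul_apply]; exact Finset.abs_sum_le_sum_abs _ _
              _ ≤ ∑ j, |A⁻¹ j s| := by
                  refine Finset.sum_le_sum fun j _ => ?_
                  rw [abs_mul, abs_of_nonneg (hMn.1 i j)]
                  calc (M ^ n) i j * |A⁻¹ j s| ≤ 1 * |A⁻¹ j s| := by
                        refine mul_le_mul_of_nonneg_right ?_ (abs_nonneg _)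
                        calc (M ^ n) i j ≤ ∑ t, (M ^ n) i t :=
                              Finset.single_le_sum (fun t _ => hMn.1 i t) (Finset.mem_univ j)
                          _ = 1 := hMn.2 i
                    _ = |A⁻¹ j s| := one_mul _
              _ ≤ B := by
                  rw [hB]
                  refine Finset.sum_le_sum fun j _ => ?_
                  exact Finset.single_le_sum (fun t _ => abs_nonneg (A⁻¹ j t)) (Finset.mem_univ s)
        _ = α * B := by
            rw [← Finset.sum_mul, ← Finset.mul_sum, he1, mul_one]
    have hge : ∀ n : ℕ, -(β ^ n * (α * B)) ≤ π s := by
      intro n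
      have h1 := hkey n
      have h2 := hnn n
      have h3 := hbound n
      have h4 : -(α * B) ≤ Matrix.vecMul (α • e) (M ^ n * A⁻¹) s := neg_le_of_abs_le h3
      nlinarith [pow_nonneg hβ0 n]
    have htend : Filter.Tendsto (fun n : ℕ => -(β ^ n * (α * B))) Filter.atTop (nhds 0) := by
      have h1 : Filter.Tendsto (fun n : ℕ => β ^ n) Filter.atTop (nhds 0) :=
        tendsto_pow_atTop_nhds_zero_of_lt_one hβ0 hβ1
      have h2 := (h1.mul_const (α * B)).neg
      simpa using h2
    exact le_of_tendsto' htend hge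
  refine ⟨hπ0, hπsum, hπp, huniq, ?_⟩
  -- convergence bound
  intro μ hμ0 hμ1 n hn
  set x : S → ℝ := μ - π with hx
  have hxsum : ∑ s, x s = 0 := by
    simp only [hx, Pi.sub_apply, Finset.sum_sub_distrib, hμ1, hπsum, sub_self]
  have hxabs : ∑ s, |x s| ≤ 2 := by
    calc ∑ s, |x s| ≤ ∑ s, (|μ s| + |π s|) :=
          Finset.sum_le_sum fun s _ => abs_sub (μ s) (π s)
      _ = 2 := by
          rw [Finset.sum_add_distrib]
          rw [Finset.sum_congr rfl fun s _ => abs_of_nonneg (hμ0 s),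
            Finset.sum_congr rfl fun s _ => abs_of_nonneg (hπ0 s), hμ1, hπsum]
          norm_num
  -- contraction by induction
  have hcontr : ∀ m : ℕ, (∑ s, Matrix.vecMul x (p ^ m) s = 0) ∧
      ∑ s, |Matrix.vecMul x (p ^ m) s| ≤ β ^ m * 2 := by
    intro m
    induction m with
    | zero => simpa [Matrix.vecMul_one] using ⟨hxsum, hxabs⟩
    | succ m ih =>
      have hstep : Matrix.vecMul x (p ^ (m + 1)) = β • Matrix.vecMul (Matrix.vecMul x (p ^ m)) M := by
        rw [pow_succ, ← Matrix.vecMul_vecMul, key, ih.1, zero_mul, zero_smul, zero_add]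
      constructor
      · rw [hstep]
        have : ∑ s, (β • Matrix.vecMul (Matrix.vecMul x (p ^ m)) M) s
            = β * ∑ s, Matrix.vecMul (Matrix.vecMul x (p ^ m)) M s := by
          simp [Finset.mul_sum]
        rw [this, sum_vecMul_rowsum_one _ M hM.2, ih.1, mul_zero]
      · rw [hstep]
        calc ∑ s, |(β • Matrix.vecMul (Matrix.vecMul x (p ^ m)) M) s|
            = β * ∑ s, |Matrix.vecMul (Matrix.vecMul x (p ^ m)) M s| := by
              simp [abs_mul, abs_of_nonneg hβ0, Finset.mul_sum]
          _ ≤ β * ∑ s, |Matrix.vecMul x (p ^ m) s| :=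
              mul_le_mul_of_nonneg_left (sum_abs_vecMul_le _ M hM.1 hM.2) hβ0
          _ ≤ β * (β ^ m * 2) := mul_le_mul_of_nonneg_left ih.2 hβ0
          _ = β ^ (m + 1) * 2 := by ring
  have hπpow : ∀ m : ℕ, Matrix.vecMul π (p ^ m) = π := by
    intro m
    induction m with
    | zero => simp [Matrix.vecMul_one]
    | succ m ih => rw [pow_succ, ← Matrix.vecMul_vecMul, ih, hπp]
  have hdiff : ∀ s, Matrix.vecMul μ (p ^ n) s - π s = Matrix.vecMul x (p ^ n) s := by
    intro s
    rw [hx, Matrix.sub_vecMul, hπpow n]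
    rfl
  have hfinal : ∑ s, |Matrix.vecMul μ (p ^ n) s - π s| ≤ β ^ n * 2 := by
    rw [Finset.sum_congr rfl fun s _ => by rw [hdiff s]]
    exact (hcontr n).2
  have hβn : 0 ≤ β ^ n := pow_nonneg hβ0 n
  linarith [hfinal]
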